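/- Let D ≥ 1 and let l : ℝ^D → ℝ be differentiable everywhere, bounded below with infimum inf l, and have an L-Lipschitz gradient. Fix γ > 0, δ⁰ ∈ ℝ^D, step sizes ε₀, …, ε_{T−1} > 0, and independent Gaussian perturbations z₀, …, z_{T−1} as above, with iterates δ^{t+1} = δ^t − ε_t·sign(∇l(δ^t) + γ z_t). Suppose there is a constant c > 0 such that almost surely, for every t < T and every coordinate i, |∂_i l(δ^t)|·(2Φ(|∂_i l(δ^t)|/γ) − 1) ≥ c·|∂_i l(δ^t)|. Then min_{0 ≤ t < T} E[‖∇l(δ^t)‖₁] ≤ ( l(δ⁰) − inf l + (L·D/2)·Σ_{t=0}^{T−1} ε_t² ) / ( c·Σ_{t=0}^{T−1} ε_t ), where ‖v‖₁ = Σ_i |v_i| is the ℓ₁ norm on ℝ^D. -/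

import Mathlib

open MeasureTheory ProbabilityTheory

/-- The cumulative distribution function of the standard normal distribution. -/
noncomputable def Phi (x : ℝ) : ℝ := ((gaussianReal 0 1) (Set.Iic x)).toReal

/-- The law of `T` independent random vectors in `ℝ^D`, each with i.i.d. standard
normal coordinates. -/
noncomputable def prodGaussian (T D : ℕ) : Measure (Fin T → Fin D → ℝ) :=
  Measure.pi fun _ => Measure.pi fun _ => gaussianReal 0 1

set_option maxHeartbeats 1000000

section Aux

lemma abs_sign_le (x : ℝ) : |Real.sign x| ≤ 1 := by
  rcases Real.sign_apply_eq x with h | h | h <;> simp [h]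

lemma measurable_realSign : Measurable Real.sign := by
  unfold Real.sign
  exact Measurable.ite (measurableSet_lt measurable_id measurable_const) measurable_const
    (Measurable.ite (measurableSet_lt measurable_const measurable_id) measurable_const
      measurable_const)

instance : NullSingletonClass (gaussianReal 0 1) := by
  constructor
  intro x
  refine gaussianReal_absolutelyContinuous 0 one_ne_zero ?_
  simp

lemma gaussian_map_neg : (gaussianReal 0 1).map (fun z : ℝ => -z) = gaussianReal 0 1 := by
  have := gaussianReal_map_const_mul (μ := 0) (v := 1) (-1)
  simp only [neg_mul, one_mul, mul_zero] at this
  convert this using 2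
  ext; norm_num

lemma Phi_neg (x : ℝ) : Phi (-x) = 1 - Phi x := by
  have hmeas : ((gaussianReal 0 1) (Set.Iic (-x))) = (gaussianReal 0 1) (Set.Ici x) := by
    conv_lhs => rw [← gaussian_map_neg]
    rw [Measure.map_apply measurable_neg measurableSet_Iic]
    congr 1
    ext z
    simp [neg_le]
  have hIci : (gaussianReal 0 1) (Set.Ici x) = 1 - (gaussianReal 0 1) (Set.Iic x) := by
    rw [← measure_congr (MeasureTheory.Ioi_ae_eq_Ici (μ := gaussianReal 0 1) (a := x))]
    rw [← Set.compl_Iic, measure_compl measurableSet_Iic (measure_ne_top _ _)]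
    simp
  have hle : (gaussianReal 0 1) (Set.Iic x) ≤ 1 := prob_le_one
  unfold Phi
  rw [hmeas, hIci, ENNReal.toReal_sub_of_le hle (by simp)]
  simp

lemma Phi_nonneg (x : ℝ) : 0 ≤ Phi x := ENNReal.toReal_nonneg

lemma Phi_le_one (x : ℝ) : Phi x ≤ 1 := by
  unfold Phi
  rw [show (1:ℝ) = (1 : ENNReal).toReal by simp]
  exact ENNReal.toReal_mono (by simp) prob_le_one

lemma Phi_mono : Monotone Phi := fun x y h =>
  ENNReal.toReal_mono (measure_ne_top _ _) (measure_mono (Set.Iic_subset_Iic.mpr h))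

lemma measurable_Phi : Measurable Phi := Phi_mono.measurable

open Set in
lemma integral_sign_gaussian (a γ : ℝ) (hγ : 0 < γ) :
    ∫ z, Real.sign (a + γ * z) ∂(gaussianReal 0 1) = 2 * Phi (a / γ) - 1 := by
  set b : ℝ := -(a / γ) with hb
  have hfun : (fun z : ℝ => Real.sign (a + γ * z)) =
      fun z => (Ioi b).indicator (fun _ => (1:ℝ)) z + (Iio b).indicator (fun _ => (-1:ℝ)) z := by
    funext z
    rcases lt_trichotomy z b with h | h | h
    · have h1 : a + γ * z < 0 := by
        rw [hb] at h
        have h2 : γ * z < γ * (-(a / γ)) := mul_lt_mul_of_pos_left h hγ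
        have h3 : γ * (-(a / γ)) = -a := by field_simp
        linarith
      simp [Real.sign_of_neg h1, indicator_apply, mem_Ioi, mem_Iio, h, not_lt.mpr h.le,
        asymm h]
    · have h1 : a + γ * z = 0 := by
        have h3 : γ * (-(a / γ)) = -a := by field_simp
        rw [h, hb, h3]
        ring
      simp [h1, indicator_apply, mem_Ioi, mem_Iio, h]
      rwa [h] at h1
    · have h1 : 0 < a + γ * z := by
        rw [hb] at h
        have h2 : γ * (-(a / γ)) < γ * z := mul_lt_mul_of_pos_left h hγ
        have h3 : γ * (-(a / γ)) = -a := by field_simp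
        linarith
      simp [Real.sign_of_pos h1, indicator_apply, mem_Ioi, mem_Iio, h, not_lt.mpr h.le,
        asymm h]
  rw [hfun]
  rw [integral_add]
  · rw [integral_indicator_const _ measurableSet_Ioi, integral_indicator_const _ measurableSet_Iio]
    have h1 : (gaussianReal 0 1) (Ioi b) = 1 - (gaussianReal 0 1) (Iic b) := by
      rw [← Set.compl_Iic, measure_compl measurableSet_Iic (measure_ne_top _ _)]
      simp
    have h2 : (gaussianReal 0 1) (Iio b) = (gaussianReal 0 1) (Iic b) :=
      measure_congr MeasureTheory.Iio_ae_eq_Iic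
    have hle : (gaussianReal 0 1) (Iic b) ≤ 1 := prob_le_one
    simp only [measureReal_def]
    rw [h1, h2]
    have : Phi b = 1 - Phi (a / γ) := by rw [hb, Phi_neg]
    have hPb : ((gaussianReal 0 1) (Iic b)).toReal = Phi b := rfl
    rw [ENNReal.toReal_sub_of_le hle (by simp)]
    simp only [smul_eq_mul, ENNReal.toReal_one, hPb, this]
    ring
  · exact ((integrable_const (1:ℝ)).indicator measurableSet_Ioi)
  · exact ((integrable_const (-1:ℝ)).indicator measurableSet_Iio)

lemma sign_pay (a γ : ℝ) : a * (2 * Phi (a / γ) - 1) = |a| * (2 * Phi (|a| / γ) - 1) := by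
  rcases le_or_gt 0 a with h | h
  · rw [abs_of_nonneg h]
  · rw [abs_of_neg h]
    have : Phi (a / γ) = 1 - Phi (-a / γ) := by
      rw [show a / γ = -(-a / γ) by ring, Phi_neg]
    rw [this]; ring

lemma measurePreserving_eval {ι : Type*} [Fintype ι] {α : ι → Type*}
    [∀ i, MeasurableSpace (α i)] (μ : ∀ i, Measure (α i)) [∀ i, IsProbabilityMeasure (μ i)]
    (i : ι) : MeasurePreserving (Function.eval i) (Measure.pi μ) (μ i) := by
  classical
  constructor
  · exact measurable_pi_apply i
  · ext s hs
    rw [Measure.map_apply (measurable_pi_apply i) hs]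
    rw [Set.eval_preimage, Measure.pi_pi]
    rw [Fintype.prod_eq_single i]
    · simp
    · intro j hj
      simp [Function.update_of_ne hj]

lemma descent_lemma {E : Type*} [NormedAddCommGroup E] [InnerProductSpace ℝ E] [CompleteSpace E]
    {l : E → ℝ} (hl : Differentiable ℝ l) {L : ℝ} (hL0 : 0 ≤ L)
    (hL : ∀ a b, ‖gradient l a - gradient l b‖ ≤ L * ‖a - b‖) (x y : E) :
    l y ≤ l x + inner ℝ (gradient l x) (y - x) + L / 2 * ‖y - x‖ ^ 2 := by
  set v := y - x with hv
  have hgc : Continuous (gradient l) := by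
    refine (LipschitzWith.of_dist_le_mul (K := Real.toNNReal L) fun a b => ?_).continuous
    rw [dist_eq_norm, dist_eq_norm, Real.coe_toNNReal L hL0]
    exact hL a b
  have key : ∀ s : ℝ, HasDerivAt (fun s : ℝ => l (x + s • v))
      (inner ℝ (gradient l (x + s • v)) v) s := by
    intro s
    have h1 : HasDerivAt (fun s : ℝ => x + s • v) v s := by
      simpa using ((hasDerivAt_id s).smul_const v).const_add x
    have h2 : HasFDerivAt l (InnerProductSpace.toDual ℝ E (gradient l (x + s • v))) (x + s • v) :=
      ((hl _).hasGradientAt).hasFDerivAt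
    exact h2.comp_hasDerivAt s h1
  have hφ'c : Continuous fun s : ℝ => (inner ℝ (gradient l (x + s • v)) v : ℝ) := by
    apply Continuous.inner
    · exact hgc.comp (by continuity)
    · exact continuous_const
  have hFTC : l (x + (1:ℝ) • v) - l (x + (0:ℝ) • v) =
      ∫ s in (0:ℝ)..1, (inner ℝ (gradient l (x + s • v)) v : ℝ) :=
    (intervalIntegral.integral_eq_sub_of_hasDerivAt (fun s _ => key s)
      (hφ'c.intervalIntegrable 0 1)).symm
  simp only [one_smul, zero_smul, add_zero] at hFTC
  have hbound : ∀ s ∈ Set.Icc (0:ℝ) 1,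
      (inner ℝ (gradient l (x + s • v)) v : ℝ) ≤ inner ℝ (gradient l x) v + L * ‖v‖ ^ 2 * s := by
    intro s hs
    have h1 : (inner ℝ (gradient l (x + s • v)) v : ℝ) - inner ℝ (gradient l x) v =
        inner ℝ (gradient l (x + s • v) - gradient l x) v := by
      rw [inner_sub_left]
    have h2 : (inner ℝ (gradient l (x + s • v) - gradient l x) v : ℝ) ≤
        ‖gradient l (x + s • v) - gradient l x‖ * ‖v‖ := real_inner_le_norm _ _
    have h3 : ‖gradient l (x + s • v) - gradient l x‖ ≤ L * (s * ‖v‖) := by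
      have := hL (x + s • v) x
      simpa [norm_smul, abs_of_nonneg hs.1] using this
    nlinarith [norm_nonneg v, hs.1, mul_le_mul_of_nonneg_right h3 (norm_nonneg v)]
  have hInt : ∫ s in (0:ℝ)..1, (inner ℝ (gradient l (x + s • v)) v : ℝ) ≤
      ∫ s in (0:ℝ)..1, (inner ℝ (gradient l x) v + L * ‖v‖ ^ 2 * s) := by
    apply intervalIntegral.integral_mono_on zero_le_one
    · exact hφ'c.intervalIntegrable 0 1
    · exact (Continuous.intervalIntegrable (by continuity) 0 1)
    · exact hbound
  have hcomp : ∫ s in (0:ℝ)..1, (inner ℝ (gradient l x) v + L * ‖v‖ ^ 2 * s : ℝ)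
      = inner ℝ (gradient l x) v + L / 2 * ‖v‖ ^ 2 := by
    rw [intervalIntegral.integral_add intervalIntegrable_const
      (Continuous.intervalIntegrable (by continuity) 0 1)]
    rw [intervalIntegral.integral_const_mul]
    simp [integral_id]
    ring
  have hxy : x + v = y := by simp [hv]
  rw [hxy] at hFTC
  linarith [hFTC, hInt, hcomp.le, hcomp.ge]

lemma euclid_coord_le_norm {D : ℕ} (x : EuclideanSpace ℝ (Fin D)) (i : Fin D) :
    |x i| ≤ ‖x‖ := by
  have h1 : |x i| = Real.sqrt (‖x i‖ ^ 2) := by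
    rw [Real.sqrt_sq_eq_abs, Real.norm_eq_abs, abs_abs]
  rw [EuclideanSpace.norm_eq, h1]
  apply Real.sqrt_le_sqrt
  exact Finset.single_le_sum (f := fun j => ‖x j‖ ^ 2) (fun j _ => by positivity)
    (Finset.mem_univ i)

lemma sign_vec_norm {D : ℕ} (f : Fin D → ℝ) :
    ‖((WithLp.equiv 2 (Fin D → ℝ)).symm (fun i => Real.sign (f i)) :
      EuclideanSpace ℝ (Fin D))‖ ≤ Real.sqrt D := by
  rw [EuclideanSpace.norm_eq]
  apply Real.sqrt_le_sqrt
  calc ∑ i, ‖((WithLp.equiv 2 (Fin D → ℝ)).symm (fun i => Real.sign (f i)) :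
        EuclideanSpace ℝ (Fin D)) i‖ ^ 2
      ≤ ∑ _i : Fin D, (1:ℝ) := by
        apply Finset.sum_le_sum
        intro i _
        rw [WithLp.equiv_symm_apply, PiLp.toLp_apply, Real.norm_eq_abs]
        calc |Real.sign (f i)| ^ 2 ≤ 1 ^ 2 :=
              pow_le_pow_left₀ (abs_nonneg _) (abs_sign_le _) 2
          _ = 1 := one_pow 2
    _ = (D : ℝ) := by simp

lemma integrable_of_bounded {α : Type*} [MeasurableSpace α] {μ : Measure α} [IsFiniteMeasure μ]
    {f : α → ℝ} (hf : Measurable f) (C : ℝ) (hC : ∀ x, |f x| ≤ C) : Integrable f μ :=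
  (integrable_const C).mono' hf.aestronglyMeasurable
    (Filter.Eventually.of_forall fun x => by simpa using hC x)

end Aux

/-- convergence of perturbed FGSM/sign-gradient: for `l` differentiable,
bounded below, with `L`-Lipschitz gradient, iterates
`δ^{t+1} = δ^t − ε_t·sign(∇l(δ^t) + γ z_t)` with positive step sizes and independent
Gaussian perturbations, if almost surely
`|∂ᵢl(δ^t)| (2Φ(|∂ᵢl(δ^t)|/γ) − 1) ≥ c |∂ᵢl(δ^t)|` for all `t < T` and all `i`, then
`min_{0 ≤ t < T} E[‖∇l(δ^t)‖₁] ≤ (l(δ⁰) − inf l + (L D / 2) Σ_t ε_t²) / (c Σ_t ε_t)`. -/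
theorem stmt9 (D T : ℕ) (hD : 1 ≤ D) (hT : 0 < T)
    (l : EuclideanSpace ℝ (Fin D) → ℝ) (hl : Differentiable ℝ l)
    (hbdd : BddBelow (Set.range l))
    (L : ℝ) (hL : ∀ a b, ‖gradient l a - gradient l b‖ ≤ L * ‖a - b‖)
    (γ : ℝ) (hγ : 0 < γ)
    (δ0 : EuclideanSpace ℝ (Fin D))
    (ε : Fin T → ℝ) (hε : ∀ t, 0 < ε t)
    (δseq : ℕ → (Fin T → Fin D → ℝ) → EuclideanSpace ℝ (Fin D))
    (hδ0 : ∀ ω, δseq 0 ω = δ0)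
    (hrec : ∀ (t : Fin T) (ω : Fin T → Fin D → ℝ),
      δseq ((t : ℕ) + 1) ω = δseq (t : ℕ) ω -
        ε t • (WithLp.equiv 2 (Fin D → ℝ)).symm
          (fun i => Real.sign (gradient l (δseq (t : ℕ) ω) i + γ * ω t i)))
    (c : ℝ) (hc : 0 < c)
    (hlow : ∀ᵐ ω ∂(prodGaussian T D), ∀ (t : Fin T) (i : Fin D),
      c * |gradient l (δseq (t : ℕ) ω) i| ≤
        |gradient l (δseq (t : ℕ) ω) i| *
          (2 * Phi (|gradient l (δseq (t : ℕ) ω) i| / γ) - 1)) :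
    (⨅ t : Fin T, ∫ ω, (∑ i, |gradient l (δseq (t : ℕ) ω) i|) ∂(prodGaussian T D)) ≤
      (l δ0 - sInf (Set.range l) + L * D / 2 * ∑ t : Fin T, (ε t) ^ 2) /
        (c * ∑ t : Fin T, ε t) := by
  classical
  obtain ⟨T', rfl⟩ : ∃ T', T = T' + 1 := ⟨T - 1, by omega⟩
  haveI hPμ : IsProbabilityMeasure (prodGaussian (T' + 1) D) := by
    unfold prodGaussian; infer_instance
  set μ := prodGaussian (T' + 1) D with hμdef
  -- basic facts
  have hL0 : 0 ≤ L := by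
    have h := hL (EuclideanSpace.single (⟨0, hD⟩ : Fin D) (1:ℝ)) 0
    have hn : ‖(EuclideanSpace.single (⟨0, hD⟩ : Fin D) (1:ℝ)) - 0‖ = 1 := by
      simp [EuclideanSpace.norm_single]
    rw [hn, mul_one] at h
    exact le_trans (norm_nonneg _) h
  have hgc : Continuous (gradient l) := by
    refine (LipschitzWith.of_dist_le_mul (K := Real.toNNReal L) fun a b => ?_).continuous
    rw [dist_eq_norm, dist_eq_norm, Real.coe_toNNReal L hL0]
    exact hL a b
  have hlc : Continuous l := hl.continuous
  have hcoord : ∀ i : Fin D, Measurable (fun x : EuclideanSpace ℝ (Fin D) => x i) :=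
    fun i => (measurable_pi_apply i).comp (MeasurableEquiv.toLp 2 (Fin D → ℝ)).symm.measurable
  -- dependence of δseq n on the first n coordinates only
  have hdep : ∀ n, n ≤ T' + 1 → ∀ ω ω' : Fin (T' + 1) → Fin D → ℝ,
      (∀ s : Fin (T' + 1), (s : ℕ) < n → ω s = ω' s) → δseq n ω = δseq n ω' := by
    intro n
    induction n with
    | zero => intro _ ω ω' _; rw [hδ0, hδ0]
    | succ n ih =>
      intro hn ω ω' h
      have hnT : n < T' + 1 := by omega
      have h1 : δseq n ω = δseq n ω' := ih (by omega) ω ω' (fun s hs => h s (by omega))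
      have h2 : ω ⟨n, hnT⟩ = ω' ⟨n, hnT⟩ := h ⟨n, hnT⟩ (by simp)
      have e1 := hrec ⟨n, hnT⟩ ω
      have e2 := hrec ⟨n, hnT⟩ ω'
      simp only [Fin.val_mk] at e1 e2
      rw [e1, e2, h1, h2]
  -- measurability
  have hmeas : ∀ n, n ≤ T' + 1 → Measurable (δseq n) := by
    intro n
    induction n with
    | zero =>
      intro _
      have : δseq 0 = fun _ => δ0 := funext hδ0
      rw [this]; exact measurable_const
    | succ n ih =>
      intro hn
      have hnT : n < T' + 1 := by omega
      have hm1 : Measurable (δseq n) := ih (by omega)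
      have hfun : δseq (n + 1) = fun ω => δseq n ω -
          ε ⟨n, hnT⟩ • (WithLp.equiv 2 (Fin D → ℝ)).symm
            (fun i => Real.sign (gradient l (δseq n ω) i + γ * ω ⟨n, hnT⟩ i)) := by
        funext ω
        have := hrec ⟨n, hnT⟩ ω
        simpa using this
      rw [hfun]
      have hm2 : Measurable (fun ω : Fin (T' + 1) → Fin D → ℝ =>
          ((WithLp.equiv 2 (Fin D → ℝ)).symm
            (fun i => Real.sign (gradient l (δseq n ω) i + γ * ω ⟨n, hnT⟩ i)) :
              EuclideanSpace ℝ (Fin D))) := by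
        refine (MeasurableEquiv.toLp 2 (Fin D → ℝ)).measurable.comp ?_
        refine measurable_pi_iff.mpr fun i => ?_
        apply measurable_realSign.comp
        apply Measurable.add
        · exact (hcoord i).comp (hgc.measurable.comp hm1)
        · exact measurable_const.mul
            ((measurable_pi_apply i).comp (measurable_pi_apply (⟨n, hnT⟩ : Fin (T' + 1))))
      exact hm1.sub (hm2.const_smul (ε ⟨n, hnT⟩))
  -- step size sum
  have hSεpos : 0 < ∑ t : Fin (T' + 1), ε t :=
    Finset.sum_pos (fun t _ => hε t) ⟨⟨0, by omega⟩, Finset.mem_univ _⟩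
  have hεle : ∀ t : Fin (T' + 1), ε t ≤ ∑ s : Fin (T' + 1), ε s :=
    fun t => Finset.single_le_sum (fun s _ => (hε s).le) (Finset.mem_univ t)
  -- boundedness of the trajectory
  set R : ℝ := (T' + 1 : ℝ) * ((∑ t : Fin (T' + 1), ε t) * Real.sqrt D) with hRdef
  have hRnn : 0 ≤ R := by positivity
  have hball : ∀ n, n ≤ T' + 1 → ∀ ω,
      ‖δseq n ω - δ0‖ ≤ (n : ℝ) * ((∑ t : Fin (T' + 1), ε t) * Real.sqrt D) := by
    intro n
    induction n with
    | zero => intro _ ω; simp [hδ0]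
    | succ n ih =>
      intro hn ω
      have hnT : n < T' + 1 := by omega
      have e1 := hrec ⟨n, hnT⟩ ω
      simp only [Fin.val_mk] at e1
      have h1 : δseq (n + 1) ω - δ0 = (δseq n ω - δ0) -
          ε ⟨n, hnT⟩ • (WithLp.equiv 2 (Fin D → ℝ)).symm
            (fun i => Real.sign (gradient l (δseq n ω) i + γ * ω ⟨n, hnT⟩ i)) := by
        rw [e1]; abel
      rw [h1]
      refine (norm_sub_le _ _).trans ?_
      have h2 : ‖ε ⟨n, hnT⟩ • ((WithLp.equiv 2 (Fin D → ℝ)).symm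
          (fun i => Real.sign (gradient l (δseq n ω) i + γ * ω ⟨n, hnT⟩ i)) :
            EuclideanSpace ℝ (Fin D))‖ ≤ (∑ t : Fin (T' + 1), ε t) * Real.sqrt D := by
        rw [norm_smul, Real.norm_eq_abs, abs_of_pos (hε _)]
        exact mul_le_mul (hεle _) (sign_vec_norm _) (norm_nonneg _) hSεpos.le
      have h3 := ih (by omega) ω
      push_cast
      nlinarith [h3, h2]
  have hball' : ∀ n, n ≤ T' + 1 → ∀ ω, ‖δseq n ω - δ0‖ ≤ R := by
    intro n hn ω
    refine (hball n hn ω).trans ?_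
    rw [hRdef]
    have : (n : ℝ) ≤ (T' + 1 : ℝ) := by exact_mod_cast hn
    have hnn : 0 ≤ (∑ t : Fin (T' + 1), ε t) * Real.sqrt D := by positivity
    nlinarith
  -- bound on gradient and function values on the trajectory
  set M : ℝ := ‖gradient l δ0‖ + L * R with hMdef
  have hMnn : 0 ≤ M := by positivity
  have hgbd : ∀ x : EuclideanSpace ℝ (Fin D), ‖x - δ0‖ ≤ R → ‖gradient l x‖ ≤ M := by
    intro x hx
    have h1 : ‖gradient l x - gradient l δ0‖ ≤ L * R :=
      (hL x δ0).trans (mul_le_mul_of_nonneg_left hx hL0)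
    calc ‖gradient l x‖ ≤ ‖gradient l δ0‖ + ‖gradient l x - gradient l δ0‖ := by
          have := norm_add_le (gradient l δ0) (gradient l x - gradient l δ0)
          simpa using this
      _ ≤ M := by rw [hMdef]; linarith
  have hgcoordbd : ∀ n, n ≤ T' + 1 → ∀ ω (i : Fin D),
      |gradient l (δseq n ω) i| ≤ M := fun n hn ω i =>
    (euclid_coord_le_norm _ i).trans (hgbd _ (hball' n hn ω))
  set Cl : ℝ := |l δ0| + M * R with hCldef
  have hlbd : ∀ x : EuclideanSpace ℝ (Fin D), ‖x - δ0‖ ≤ R → |l x| ≤ Cl := by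
    intro x hx
    have hfd : ∀ y ∈ Metric.closedBall δ0 R, ‖fderiv ℝ l y‖ ≤ M := by
      intro y hy
      have h1 : fderiv ℝ l y = InnerProductSpace.toDual ℝ _ (gradient l y) :=
        ((hl y).hasGradientAt.hasFDerivAt).fderiv
      rw [h1, LinearIsometryEquiv.norm_map]
      exact hgbd y (by simpa [dist_eq_norm] using hy)
    have h2 : ‖l x - l δ0‖ ≤ M * ‖x - δ0‖ :=
      Convex.norm_image_sub_le_of_norm_fderiv_le (fun y _ => hl y) hfd
        (convex_closedBall δ0 R) (Metric.mem_closedBall_self hRnn)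
        (by simpa [dist_eq_norm] using hx)
    have h3 : M * ‖x - δ0‖ ≤ M * R := mul_le_mul_of_nonneg_left hx hMnn
    rw [Real.norm_eq_abs] at h2
    rw [hCldef]
    have := abs_sub_abs_le_abs_sub (l x) (l δ0)
    linarith [abs_nonneg (l x - l δ0)]
  -- integrability of the relevant integrands
  have hlmeas : ∀ n, n ≤ T' + 1 → Measurable (fun ω => l (δseq n ω)) :=
    fun n hn => hlc.measurable.comp (hmeas n hn)
  have hlint : ∀ n, n ≤ T' + 1 → Integrable (fun ω => l (δseq n ω)) μ :=
    fun n hn => integrable_of_bounded (hlmeas n hn) Cl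
      (fun ω => hlbd _ (hball' n hn ω))
  have hgcm : ∀ n, n ≤ T' + 1 → ∀ i : Fin D,
      Measurable (fun ω => gradient l (δseq n ω) i) :=
    fun n hn i => (hcoord i).comp (hgc.measurable.comp (hmeas n hn))
  have hAImeas : ∀ t : Fin (T' + 1),
      Measurable (fun ω => ∑ i, |gradient l (δseq (t : ℕ) ω) i|) := by
    intro t
    exact Finset.measurable_sum _ fun i _ => (hgcm _ (by omega) i).abs
  have hAIbd : ∀ (t : Fin (T' + 1)) ω,
      abs (∑ i, |gradient l (δseq (t : ℕ) ω) i|) ≤ (D : ℝ) * M := by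
    intro t ω
    rw [abs_of_nonneg (Finset.sum_nonneg fun i _ => abs_nonneg _)]
    calc ∑ i, |gradient l (δseq (t : ℕ) ω) i| ≤ ∑ _i : Fin D, M :=
          Finset.sum_le_sum fun i _ => hgcoordbd _ (by omega) ω i
      _ = (D : ℝ) * M := by simp [mul_comm]
  have hAIint : ∀ t : Fin (T' + 1),
      Integrable (fun ω => ∑ i, |gradient l (δseq (t : ℕ) ω) i|) μ :=
    fun t => integrable_of_bounded (hAImeas t) _ (hAIbd t)
  have hFImeas : ∀ t : Fin (T' + 1),
      Measurable (fun ω => ∑ i, gradient l (δseq (t : ℕ) ω) i *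
        Real.sign (gradient l (δseq (t : ℕ) ω) i + γ * ω t i)) := by
    intro t
    refine Finset.measurable_sum _ fun i _ => ?_
    refine (hgcm _ (by omega) i).mul ?_
    exact measurable_realSign.comp ((hgcm _ (by omega) i).add
      (measurable_const.mul ((measurable_pi_apply i).comp (measurable_pi_apply t))))
  have hFIbd : ∀ (t : Fin (T' + 1)) ω,
      abs (∑ i, gradient l (δseq (t : ℕ) ω) i *
        Real.sign (gradient l (δseq (t : ℕ) ω) i + γ * ω t i)) ≤ (D : ℝ) * M := by
    intro t ω
    calc abs (∑ i, gradient l (δseq (t : ℕ) ω) i *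
        Real.sign (gradient l (δseq (t : ℕ) ω) i + γ * ω t i))
        ≤ ∑ i, |gradient l (δseq (t : ℕ) ω) i *
          Real.sign (gradient l (δseq (t : ℕ) ω) i + γ * ω t i)| :=
          Finset.abs_sum_le_sum_abs _ _
      _ ≤ ∑ _i : Fin D, M := by
          refine Finset.sum_le_sum fun i _ => ?_
          rw [abs_mul]
          calc |gradient l (δseq (t : ℕ) ω) i| *
              |Real.sign (gradient l (δseq (t : ℕ) ω) i + γ * ω t i)|
              ≤ M * 1 := mul_le_mul (hgcoordbd _ (by omega) ω i) (abs_sign_le _)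
                (abs_nonneg _) hMnn
            _ = M := mul_one M
      _ = (D : ℝ) * M := by simp [mul_comm]
  have hFIint : ∀ t : Fin (T' + 1),
      Integrable (fun ω => ∑ i, gradient l (δseq (t : ℕ) ω) i *
        Real.sign (gradient l (δseq (t : ℕ) ω) i + γ * ω t i)) μ :=
    fun t => integrable_of_bounded (hFImeas t) _ (hFIbd t)
  -- pointwise descent inequality
  have hdesc : ∀ (t : Fin (T' + 1)) ω, l (δseq ((t : ℕ) + 1) ω) ≤ l (δseq (t : ℕ) ω) -
      ε t * (∑ i, gradient l (δseq (t : ℕ) ω) i *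
        Real.sign (gradient l (δseq (t : ℕ) ω) i + γ * ω t i)) +
      L * (D : ℝ) / 2 * ε t ^ 2 := by
    intro t ω
    set x := δseq (t : ℕ) ω with hx
    set v : EuclideanSpace ℝ (Fin D) := (WithLp.equiv 2 (Fin D → ℝ)).symm
      (fun i => Real.sign (gradient l x i + γ * ω t i)) with hvdef
    have hy : δseq ((t : ℕ) + 1) ω = x - ε t • v := hrec t ω
    have hd := descent_lemma hl hL0 hL x (δseq ((t : ℕ) + 1) ω)
    have hyx : δseq ((t : ℕ) + 1) ω - x = -(ε t • v) := by rw [hy]; abel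
    rw [hyx] at hd
    have hinner : (inner ℝ (gradient l x) (-(ε t • v)) : ℝ) =
        -(ε t * ∑ i, gradient l x i *
          Real.sign (gradient l x i + γ * ω t i)) := by
      rw [inner_neg_right, real_inner_smul_right]
      have hiv : (inner ℝ (gradient l x) v : ℝ) =
          ∑ i, gradient l x i * Real.sign (gradient l x i + γ * ω t i) := by
        rw [PiLp.inner_apply]
        refine Finset.sum_congr rfl fun i _ => ?_
        rw [RCLike.inner_apply]
        simp [hvdef, WithLp.equiv_symm_apply, PiLp.toLp_apply, mul_comm]
      rw [hiv]
    have hnorm : ‖-(ε t • v)‖ ^ 2 ≤ ε t ^ 2 * D := by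
      rw [norm_neg, norm_smul, mul_pow, Real.norm_eq_abs, sq_abs]
      have h2 : ‖v‖ ^ 2 ≤ Real.sqrt D ^ 2 :=
        pow_le_pow_left₀ (norm_nonneg _) (sign_vec_norm _) 2
      rw [Real.sq_sqrt (by positivity : (0:ℝ) ≤ (D:ℝ))] at h2
      nlinarith [sq_nonneg (ε t)]
    have h4 : L / 2 * ‖-(ε t • v)‖ ^ 2 ≤ L * (D : ℝ) / 2 * ε t ^ 2 := by
      have := mul_le_mul_of_nonneg_left hnorm (by linarith : (0:ℝ) ≤ L / 2)
      nlinarith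
    rw [hinner] at hd
    linarith
  -- integrated descent inequality
  have hstep : ∀ t : Fin (T' + 1),
      (∫ ω, l (δseq ((t : ℕ) + 1) ω) ∂μ) ≤ (∫ ω, l (δseq (t : ℕ) ω) ∂μ) -
        ε t * (∫ ω, (∑ i, gradient l (δseq (t : ℕ) ω) i *
          Real.sign (gradient l (δseq (t : ℕ) ω) i + γ * ω t i)) ∂μ) +
        L * (D : ℝ) / 2 * ε t ^ 2 := by
    intro t
    have h1 : Integrable (fun ω => l (δseq ((t : ℕ) + 1) ω)) μ := hlint _ (by omega)
    have h2 : Integrable (fun ω => l (δseq (t : ℕ) ω)) μ := hlint _ (by omega)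
    have h3 := hFIint t
    have hg2 : Integrable (fun ω => l (δseq (t : ℕ) ω) - ε t * (∑ i,
        gradient l (δseq (t : ℕ) ω) i *
          Real.sign (gradient l (δseq (t : ℕ) ω) i + γ * ω t i))) μ :=
      h2.sub (h3.const_mul (ε t))
    have hmono : (∫ ω, l (δseq ((t : ℕ) + 1) ω) ∂μ) ≤
        ∫ ω, (l (δseq (t : ℕ) ω) - ε t * (∑ i, gradient l (δseq (t : ℕ) ω) i *
          Real.sign (gradient l (δseq (t : ℕ) ω) i + γ * ω t i)) +
          L * (D : ℝ) / 2 * ε t ^ 2) ∂μ :=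
      integral_mono h1 (by exact hg2.add (integrable_const _)) (fun ω => hdesc t ω)
    have e1 : (∫ ω, (l (δseq (t : ℕ) ω) - ε t * (∑ i, gradient l (δseq (t : ℕ) ω) i *
          Real.sign (gradient l (δseq (t : ℕ) ω) i + γ * ω t i)) +
          L * (D : ℝ) / 2 * ε t ^ 2) ∂μ) =
        (∫ ω, (l (δseq (t : ℕ) ω) - ε t * (∑ i, gradient l (δseq (t : ℕ) ω) i *
          Real.sign (gradient l (δseq (t : ℕ) ω) i + γ * ω t i))) ∂μ) +
        ∫ (_ : Fin (T' + 1) → Fin D → ℝ), (L * (D : ℝ) / 2 * ε t ^ 2) ∂μ :=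
      integral_add hg2 (integrable_const _)
    have e1' : (∫ (_ : Fin (T' + 1) → Fin D → ℝ), (L * (D : ℝ) / 2 * ε t ^ 2) ∂μ) =
        L * (D : ℝ) / 2 * ε t ^ 2 := by
      rw [integral_const, probReal_univ, one_smul]
    have e2 : (∫ ω, (l (δseq (t : ℕ) ω) - ε t * (∑ i, gradient l (δseq (t : ℕ) ω) i *
          Real.sign (gradient l (δseq (t : ℕ) ω) i + γ * ω t i))) ∂μ) =
        (∫ ω, l (δseq (t : ℕ) ω) ∂μ) - ∫ ω, (ε t * (∑ i, gradient l (δseq (t : ℕ) ω) i *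
          Real.sign (gradient l (δseq (t : ℕ) ω) i + γ * ω t i))) ∂μ :=
      integral_sub h2 (h3.const_mul (ε t))
    have e3 : (∫ ω, (ε t * (∑ i, gradient l (δseq (t : ℕ) ω) i *
          Real.sign (gradient l (δseq (t : ℕ) ω) i + γ * ω t i))) ∂μ) =
        ε t * ∫ ω, (∑ i, gradient l (δseq (t : ℕ) ω) i *
          Real.sign (gradient l (δseq (t : ℕ) ω) i + γ * ω t i)) ∂μ :=
      integral_const_mul _ _
    linarith [hmono, e1, e1', e2, e3]
  -- the key lower bound on the expected inner product, via independence of ω t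
  have hkey : ∀ t : Fin (T' + 1),
      c * (∫ ω, (∑ i, |gradient l (δseq (t : ℕ) ω) i|) ∂μ) ≤
        ∫ ω, (∑ i, gradient l (δseq (t : ℕ) ω) i *
          Real.sign (gradient l (δseq (t : ℕ) ω) i + γ * ω t i)) ∂μ := by
    intro t
    set ν : Measure (Fin D → ℝ) := Measure.pi fun _ => gaussianReal 0 1 with hνdef
    haveI : IsProbabilityMeasure ν := by rw [hνdef]; infer_instance
    set π' : Measure (Fin T' → Fin D → ℝ) := Measure.pi fun _ => ν with hπdef
    haveI : IsProbabilityMeasure π' := by rw [hπdef]; infer_instance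
    set e := MeasurableEquiv.piFinSuccAbove (fun _ : Fin (T' + 1) => Fin D → ℝ) t with hedef
    have mp : MeasurePreserving (⇑e) μ (ν.prod π') :=
      measurePreserving_piFinSuccAbove (fun _ : Fin (T' + 1) => ν) t
    have hesymm : ∀ (z : Fin D → ℝ) (w : Fin T' → Fin D → ℝ),
        e.symm (z, w) = Fin.insertNth t z w := by
      intro z w
      rw [hedef, MeasurableEquiv.piFinSuccAbove_symm_apply]
      funext j
      rw [Fin.insertNthEquiv_apply]
    set Λ : (Fin T' → Fin D → ℝ) → EuclideanSpace ℝ (Fin D) :=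
      fun w => δseq (t : ℕ) (e.symm (0, w)) with hΛdef
    have hΛeq : ∀ (z : Fin D → ℝ) (w : Fin T' → Fin D → ℝ),
        δseq (t : ℕ) (e.symm (z, w)) = Λ w := by
      intro z w
      refine hdep (t : ℕ) (by omega) _ _ fun s hs => ?_
      have hst : s ≠ t := by
        intro h
        rw [h] at hs
        omega
      obtain ⟨j, hj⟩ := Fin.exists_succAbove_eq hst
      rw [← hj, hesymm, hesymm, Fin.insertNth_apply_succAbove, Fin.insertNth_apply_succAbove]
    have hΛmeas : Measurable Λ :=
      (hmeas (t : ℕ) (by omega)).comp (e.symm.measurable.comp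
        (measurable_const.prodMk measurable_id))
    have hΛball : ∀ w, ‖Λ w - δ0‖ ≤ R := fun w => hball' (t : ℕ) (by omega) _
    have hacoordM : ∀ w i, |gradient l (Λ w) i| ≤ M :=
      fun w i => (euclid_coord_le_norm _ i).trans (hgbd _ (hΛball w))
    have hacoordmeas : ∀ i : Fin D, Measurable (fun w => gradient l (Λ w) i) :=
      fun i => (hcoord i).comp (hgc.measurable.comp hΛmeas)
    -- transport principle
    have htrans : ∀ (G : (Fin (T' + 1) → Fin D → ℝ) → ℝ)
        (H : (Fin D → ℝ) × (Fin T' → Fin D → ℝ) → ℝ),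
        (∀ p, G (e.symm p) = H p) → ∫ ω, G ω ∂μ = ∫ p, H p ∂(ν.prod π') := by
      intro G H hGH
      rw [← (mp.symm e).integral_comp' G]
      exact integral_congr_ae (Filter.Eventually.of_forall fun p => hGH p)
    -- pushing functions of the second coordinate down to π'
    have hsnd : ∀ (h : (Fin T' → Fin D → ℝ) → ℝ), Measurable h →
        ∫ p : (Fin D → ℝ) × (Fin T' → Fin D → ℝ), h p.2 ∂(ν.prod π') = ∫ w, h w ∂π' := by
      intro h hh
      have hmap : (ν.prod π').map Prod.snd = π' := by
        rw [Measure.map_snd_prod, measure_univ, one_smul]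
      conv_rhs => rw [← hmap]
      rw [integral_map measurable_snd.aemeasurable]
      exact hh.aestronglyMeasurable
    -- the A-integral transported
    have hAI : ∫ ω, (∑ i, |gradient l (δseq (t : ℕ) ω) i|) ∂μ =
        ∫ w, (∑ i, |gradient l (Λ w) i|) ∂π' := by
      rw [htrans _ (fun p => ∑ i, |gradient l (Λ p.2) i|)
        (fun p => by rw [show δseq (t : ℕ) (e.symm p) = Λ p.2 from hΛeq p.1 p.2])]
      exact hsnd _ (Finset.measurable_sum _ fun i _ => (hacoordmeas i).abs)
    -- the F-integral transported and computed
    have hsame : ∀ p : (Fin D → ℝ) × (Fin T' → Fin D → ℝ), (e.symm p) t = p.1 := by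
      intro p
      have := hesymm p.1 p.2
      rw [show (p.1, p.2) = p from rfl] at this
      rw [this, Fin.insertNth_apply_same]
    have hsignint : ∀ (w : Fin T' → Fin D → ℝ) (i : Fin D),
        Integrable (fun z : Fin D → ℝ =>
          gradient l (Λ w) i * Real.sign (gradient l (Λ w) i + γ * z i)) ν := by
      intro w i
      refine integrable_of_bounded ?_ M ?_
      · exact measurable_const.mul (measurable_realSign.comp
          (measurable_const.add (measurable_const.mul (measurable_pi_apply i))))
      · intro z
        rw [abs_mul]
        calc |gradient l (Λ w) i| * |Real.sign (gradient l (Λ w) i + γ * z i)| ≤ M * 1 :=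
              mul_le_mul (hacoordM w i) (abs_sign_le _) (abs_nonneg _) hMnn
          _ = M := mul_one M
    have hinner : ∀ w : Fin T' → Fin D → ℝ,
        ∫ z, (∑ i, gradient l (Λ w) i * Real.sign (gradient l (Λ w) i + γ * z i)) ∂ν =
          ∑ i, |gradient l (Λ w) i| * (2 * Phi (|gradient l (Λ w) i| / γ) - 1) := by
      intro w
      rw [integral_finset_sum _ (fun i _ => hsignint w i)]
      refine Finset.sum_congr rfl fun i _ => ?_
      rw [integral_const_mul]
      have hmap : ∫ z, Real.sign (gradient l (Λ w) i + γ * z i) ∂ν =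
          ∫ x, Real.sign (gradient l (Λ w) i + γ * x) ∂(gaussianReal 0 1) := by
        rw [← (_root_.measurePreserving_eval (fun _ : Fin D => gaussianReal 0 1) i).map_eq]
        rw [integral_map (measurable_pi_apply i).aemeasurable]
        exact (measurable_realSign.comp
          (measurable_const.add (measurable_const.mul measurable_id))).aestronglyMeasurable
      rw [hmap, integral_sign_gaussian _ _ hγ, sign_pay]
    have hHint : Integrable (fun p : (Fin D → ℝ) × (Fin T' → Fin D → ℝ) =>
        ∑ i, gradient l (Λ p.2) i * Real.sign (gradient l (Λ p.2) i + γ * p.1 i))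
        (ν.prod π') := by
      refine integrable_of_bounded ?_ ((D : ℝ) * M) ?_
      · refine Finset.measurable_sum _ fun i _ => ?_
        refine ((hacoordmeas i).comp measurable_snd).mul ?_
        exact measurable_realSign.comp (((hacoordmeas i).comp measurable_snd).add
          (measurable_const.mul ((measurable_pi_apply i).comp measurable_fst)))
      · intro p
        calc abs (∑ i, gradient l (Λ p.2) i * Real.sign (gradient l (Λ p.2) i + γ * p.1 i))
            ≤ ∑ i, |gradient l (Λ p.2) i * Real.sign (gradient l (Λ p.2) i + γ * p.1 i)| :=
              Finset.abs_sum_le_sum_abs _ _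
          _ ≤ ∑ _i : Fin D, M := by
              refine Finset.sum_le_sum fun i _ => ?_
              rw [abs_mul]
              calc |gradient l (Λ p.2) i| * |Real.sign (gradient l (Λ p.2) i + γ * p.1 i)|
                  ≤ M * 1 := mul_le_mul (hacoordM p.2 i) (abs_sign_le _) (abs_nonneg _) hMnn
                _ = M := mul_one M
          _ = (D : ℝ) * M := by simp [mul_comm]
    have hFI : ∫ ω, (∑ i, gradient l (δseq (t : ℕ) ω) i *
        Real.sign (gradient l (δseq (t : ℕ) ω) i + γ * ω t i)) ∂μ =
        ∫ w, (∑ i, |gradient l (Λ w) i| * (2 * Phi (|gradient l (Λ w) i| / γ) - 1)) ∂π' := by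
      rw [htrans _ (fun p => ∑ i, gradient l (Λ p.2) i *
          Real.sign (gradient l (Λ p.2) i + γ * p.1 i))
        (fun p => by
          rw [show δseq (t : ℕ) (e.symm p) = Λ p.2 from hΛeq p.1 p.2, hsame p])]
      rw [integral_prod_symm _ hHint]
      exact integral_congr_ae (Filter.Eventually.of_forall fun w => hinner w)
    -- transporting the a.s. hypothesis
    have hlowp : ∀ᵐ p ∂(ν.prod π'), ∀ (s : Fin (T' + 1)) (i : Fin D),
        c * |gradient l (δseq (s : ℕ) (e.symm p)) i| ≤
          |gradient l (δseq (s : ℕ) (e.symm p)) i| *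
            (2 * Phi (|gradient l (δseq (s : ℕ) (e.symm p)) i| / γ) - 1) :=
      (mp.symm e).quasiMeasurePreserving.ae hlow
    have hlow2 : ∀ᵐ p ∂(ν.prod π'), ∀ i : Fin D,
        c * |gradient l (Λ p.2) i| ≤
          |gradient l (Λ p.2) i| * (2 * Phi (|gradient l (Λ p.2) i| / γ) - 1) := by
      filter_upwards [hlowp] with p hp
      intro i
      have h1 := hp t i
      have h2 : δseq (t : ℕ) (e.symm p) = Λ p.2 := hΛeq p.1 p.2
      rwa [h2] at h1
    haveI : (ae ν).NeBot := ae_neBot.mpr (IsProbabilityMeasure.ne_zero ν)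
    have haew : ∀ᵐ w ∂π', ∀ i : Fin D,
        c * |gradient l (Λ w) i| ≤
          |gradient l (Λ w) i| * (2 * Phi (|gradient l (Λ w) i| / γ) - 1) := by
      obtain ⟨z₀, hz⟩ := (Measure.ae_ae_of_ae_prod hlow2).exists
      exact hz
    -- final comparison
    have hint1 : Integrable (fun w => ∑ i, c * |gradient l (Λ w) i|) π' := by
      refine integrable_of_bounded
        (Finset.measurable_sum _ fun i _ => measurable_const.mul (hacoordmeas i).abs)
        ((D : ℝ) * (|c| * M)) ?_
      intro w
      calc abs (∑ i, c * |gradient l (Λ w) i|) ≤ ∑ i, abs (c * |gradient l (Λ w) i|) :=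
            Finset.abs_sum_le_sum_abs _ _
        _ ≤ ∑ _i : Fin D, |c| * M := by
            refine Finset.sum_le_sum fun i _ => ?_
            rw [abs_mul, abs_abs]
            exact mul_le_mul_of_nonneg_left (hacoordM w i) (abs_nonneg c)
        _ = (D : ℝ) * (|c| * M) := by simp [mul_comm]
    have hint2 : Integrable
        (fun w => ∑ i, |gradient l (Λ w) i| * (2 * Phi (|gradient l (Λ w) i| / γ) - 1)) π' := by
      refine integrable_of_bounded ?_ ((D : ℝ) * M) ?_
      · refine Finset.measurable_sum _ fun i _ => ?_
        refine (hacoordmeas i).abs.mul ?_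
        refine Measurable.sub ?_ measurable_const
        exact measurable_const.mul (measurable_Phi.comp ((hacoordmeas i).abs.div
          measurable_const))
      · intro w
        calc abs (∑ i, |gradient l (Λ w) i| * (2 * Phi (|gradient l (Λ w) i| / γ) - 1))
            ≤ ∑ i, abs (|gradient l (Λ w) i| * (2 * Phi (|gradient l (Λ w) i| / γ) - 1)) :=
              Finset.abs_sum_le_sum_abs _ _
          _ ≤ ∑ _i : Fin D, M := by
              refine Finset.sum_le_sum fun i _ => ?_
              rw [abs_mul, abs_abs]
              have hb : |2 * Phi (|gradient l (Λ w) i| / γ) - 1| ≤ 1 := by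
                rw [abs_le]
                constructor
                · have := Phi_nonneg (|gradient l (Λ w) i| / γ); linarith
                · have := Phi_le_one (|gradient l (Λ w) i| / γ); linarith
              calc |gradient l (Λ w) i| * |2 * Phi (|gradient l (Λ w) i| / γ) - 1|
                  ≤ M * 1 := mul_le_mul (hacoordM w i) hb (abs_nonneg _) hMnn
                _ = M := mul_one M
          _ = (D : ℝ) * M := by simp [mul_comm]
    have hcompare : ∫ w, (∑ i, c * |gradient l (Λ w) i|) ∂π' ≤
        ∫ w, (∑ i, |gradient l (Λ w) i| * (2 * Phi (|gradient l (Λ w) i| / γ) - 1)) ∂π' := by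
      refine integral_mono_ae hint1 hint2 ?_
      filter_upwards [haew] with w hw
      exact Finset.sum_le_sum fun i _ => hw i
    calc c * (∫ ω, (∑ i, |gradient l (δseq (t : ℕ) ω) i|) ∂μ)
        = c * ∫ w, (∑ i, |gradient l (Λ w) i|) ∂π' := by rw [hAI]
      _ = ∫ w, c * (∑ i, |gradient l (Λ w) i|) ∂π' := (integral_const_mul c _).symm
      _ = ∫ w, (∑ i, c * |gradient l (Λ w) i|) ∂π' := by
          refine integral_congr_ae (Filter.Eventually.of_forall fun w => ?_)
          exact Finset.mul_sum _ _ _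
      _ ≤ ∫ w, (∑ i, |gradient l (Λ w) i| * (2 * Phi (|gradient l (Λ w) i| / γ) - 1)) ∂π' :=
          hcompare
      _ = ∫ ω, (∑ i, gradient l (δseq (t : ℕ) ω) i *
          Real.sign (gradient l (δseq (t : ℕ) ω) i + γ * ω t i)) ∂μ := hFI.symm
  -- assembling: infimum and telescoping
  set m := ⨅ t : Fin (T' + 1), ∫ ω, (∑ i, |gradient l (δseq (t : ℕ) ω) i|) ∂μ with hmdef
  have hmle : ∀ t : Fin (T' + 1),
      m ≤ ∫ ω, (∑ i, |gradient l (δseq (t : ℕ) ω) i|) ∂μ := by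
    intro t
    rw [hmdef]
    exact ciInf_le (Set.Finite.bddBelow (Set.finite_range _)) t
  have hstep2 : ∀ t : Fin (T' + 1),
      (∫ ω, l (δseq ((t : ℕ) + 1) ω) ∂μ) ≤ (∫ ω, l (δseq (t : ℕ) ω) ∂μ) -
        (c * m) * ε t + L * (D : ℝ) / 2 * ε t ^ 2 := by
    intro t
    have h1 := hstep t
    have h2 := hkey t
    have h3 : (c * m) * ε t ≤ ε t * ∫ ω, (∑ i, gradient l (δseq (t : ℕ) ω) i *
        Real.sign (gradient l (δseq (t : ℕ) ω) i + γ * ω t i)) ∂μ := by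
      have h4 : c * m ≤ c * ∫ ω, (∑ i, |gradient l (δseq (t : ℕ) ω) i|) ∂μ :=
        mul_le_mul_of_nonneg_left (hmle t) hc.le
      calc (c * m) * ε t ≤ (c * ∫ ω, (∑ i, |gradient l (δseq (t : ℕ) ω) i|) ∂μ) * ε t :=
            mul_le_mul_of_nonneg_right h4 (hε t).le
        _ = ε t * (c * ∫ ω, (∑ i, |gradient l (δseq (t : ℕ) ω) i|) ∂μ) := by ring
        _ ≤ ε t * ∫ ω, (∑ i, gradient l (δseq (t : ℕ) ω) i *
            Real.sign (gradient l (δseq (t : ℕ) ω) i + γ * ω t i)) ∂μ :=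
            mul_le_mul_of_nonneg_left h2 (hε t).le
    linarith
  set ε' : ℕ → ℝ := fun s => if h : s < T' + 1 then ε ⟨s, h⟩ else 0 with hε'def
  have htel : ∀ n, n ≤ T' + 1 →
      (∫ ω, l (δseq n ω) ∂μ) + (c * m) * (∑ s ∈ Finset.range n, ε' s) ≤
        (∫ ω, l (δseq 0 ω) ∂μ) + L * (D : ℝ) / 2 * (∑ s ∈ Finset.range n, ε' s ^ 2) := by
    intro n
    induction n with
    | zero => intro _; simp
    | succ n ih =>
      intro hn
      have hnT : n < T' + 1 := by omega
      have h := hstep2 ⟨n, hnT⟩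
      simp only [Fin.val_mk] at h
      have hih := ih (by omega)
      have hε'n : ε' n = ε ⟨n, hnT⟩ := dif_pos hnT
      rw [Finset.sum_range_succ, Finset.sum_range_succ, hε'n]
      have hε'n2 : ε' n ^ 2 = ε ⟨n, hnT⟩ ^ 2 := by rw [hε'n]
      nlinarith [h, hih]
  have hB0 : (∫ ω, l (δseq 0 ω) ∂μ) = l δ0 := by
    have h1 : (fun ω : Fin (T' + 1) → Fin D → ℝ => l (δseq 0 ω)) = fun _ => l δ0 :=
      funext fun ω => by rw [hδ0]
    rw [h1, integral_const, probReal_univ, one_smul]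
  have hBT : sInf (Set.range l) ≤ ∫ ω, l (δseq (T' + 1) ω) ∂μ := by
    have h1 : ∀ ω : Fin (T' + 1) → Fin D → ℝ, sInf (Set.range l) ≤ l (δseq (T' + 1) ω) :=
      fun ω => csInf_le hbdd ⟨_, rfl⟩
    calc sInf (Set.range l) = ∫ _ω : Fin (T' + 1) → Fin D → ℝ, sInf (Set.range l) ∂μ := by
          rw [integral_const, probReal_univ, one_smul]
      _ ≤ ∫ ω, l (δseq (T' + 1) ω) ∂μ := integral_mono (integrable_const _)
          (hlint (T' + 1) le_rfl) h1
  have hsum1 : ∑ s ∈ Finset.range (T' + 1), ε' s = ∑ t : Fin (T' + 1), ε t := by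
    rw [← Fin.sum_univ_eq_sum_range]
    refine Finset.sum_congr rfl fun t _ => ?_
    rw [hε'def]
    simp only [Fin.is_lt, dif_pos, Fin.eta]
  have hsum2 : ∑ s ∈ Finset.range (T' + 1), ε' s ^ 2 = ∑ t : Fin (T' + 1), ε t ^ 2 := by
    rw [← Fin.sum_univ_eq_sum_range (fun s => ε' s ^ 2)]
    refine Finset.sum_congr rfl fun t _ => ?_
    rw [hε'def]
    simp only [Fin.is_lt, dif_pos, Fin.eta]
  have hfinal := htel (T' + 1) le_rfl
  rw [hB0, hsum1, hsum2] at hfinal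
  -- conclude
  have hpos : 0 < c * ∑ t : Fin (T' + 1), ε t := mul_pos hc hSεpos
  rw [le_div_iff₀ hpos]
  have hm2 : m * (c * ∑ t : Fin (T' + 1), ε t) = (c * m) * ∑ t : Fin (T' + 1), ε t := by ring
  rw [hm2]
  linarith [hBT, hfinal]
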